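/- Let K be a field with a nontrivial nonarchimedean multiplicative norm ‖·‖ : K → ℝ≥0, let K° = {x ∈ K : ‖x‖ ≤ 1} be its valuation ring and 𝔪 = {x ∈ K : ‖x‖ < 1} its maximal ideal. Then Ext¹_{K°}(𝔪, K) = 0, where K is regarded as a K°-module via the inclusion K° ⊆ K (equivalently, every short exact sequence of K°-modules 0 → K → E → 𝔪 → 0 splits). -/

import Mathlib

/-- The maximal ideal `𝔪 = {x ∈ K : ‖x‖ < 1}` of the valuation ring
`K° = {x ∈ K : ‖x‖ ≤ 1}`, regarded as a `K°`-submodule of `K`. -/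
def maxIdealSubmodule {K : Type*} [Field K] (v : Valuation K NNReal) :
    Submodule v.integer K where
  carrier := {x : K | v x < 1}
  add_mem' := fun {a b} ha hb => lt_of_le_of_lt (v.map_add a b) (max_lt ha hb)
  zero_mem' := by simp
  smul_mem' := fun c x hx => by
    have hc : v (c : K) ≤ 1 := c.2
    have : v ((c : K) * x) < 1 := by
      calc v ((c : K) * x) = v (c : K) * v x := v.map_mul _ _
        _ ≤ 1 * v x := by gcongr
        _ = v x := one_mul _
        _ < 1 := hx
    simpa [Subring.smul_def] using this

set_option synthInstance.maxHeartbeats 400000 in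
/-- The fraction field `K` satisfies Baer's criterion over the valuation ring `K°`,
hence is an injective `K°`-module. -/
lemma baer_field_valuation {K : Type*} [Field K] (v : Valuation K NNReal) :
    Module.Baer v.integer K := by
  intro I g
  by_cases h0 : ∀ x : I, g x = 0
  · exact ⟨0, fun x hx => by simp [h0 ⟨x, hx⟩]⟩
  · push_neg at h0
    obtain ⟨a, ha⟩ := h0
    have ha0 : (a : v.integer) ≠ 0 := by
      rintro h
      apply ha
      have : a = 0 := Subtype.ext h
      simp [this]
    have haK : ((a : v.integer) : K) ≠ 0 := fun h => ha0 (Subtype.ext h)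
    set q : K := g a / ((a : v.integer) : K) with hq
    refine ⟨{ toFun := fun r => q * (r : K)
              map_add' := fun r s => by push_cast; ring
              map_smul' := fun r s => by
                simp [Subring.smul_def]; push_cast; ring }, ?_⟩
    intro x hx
    have e1 : (a : v.integer) • (⟨x, hx⟩ : I) = x • a := Subtype.ext (mul_comm _ _)
    have e2 := congrArg g e1
    rw [g.map_smul, g.map_smul] at e2
    have e3 : ((a : v.integer) : K) * g ⟨x, hx⟩ = (x : K) * g a := by
      simpa [Subring.smul_def] using e2
    show q * (x : K) = g ⟨x, hx⟩
    rw [hq]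
    field_simp
    linear_combination -e3

/-- Let `K` be a field with a nontrivial nonarchimedean multiplicative norm, `K°` its
valuation ring and `𝔪` its maximal ideal.  Then `Ext¹_{K°}(𝔪, K) = 0`: every short exact
sequence of `K°`-modules `0 → K → E → 𝔪 → 0` splits. -/
theorem ext_maxIdeal_field_eq_zero (K : Type*) [Field K]
    (v : Valuation K NNReal) (hnt : ∃ x : K, x ≠ 0 ∧ v x ≠ 1) :
    ∀ (E : Type*) [AddCommGroup E] [Module v.integer E]
      (i : K →ₗ[v.integer] E)
      (π' : E →ₗ[v.integer] maxIdealSubmodule v),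
      Function.Injective i → Function.Surjective π' →
      LinearMap.range i = LinearMap.ker π' →
      ∃ s : maxIdealSubmodule v →ₗ[v.integer] E, π' ∘ₗ s = LinearMap.id := by
  intro E _ _ i π' hi hπ hrange
  obtain ⟨r, hr⟩ := (baer_field_valuation v).extension_property i hi
    (LinearMap.id : K →ₗ[v.integer] K)
  set p : E →ₗ[v.integer] E := LinearMap.id - i ∘ₗ r with hp
  have hker : LinearMap.ker π' ≤ LinearMap.ker p := by
    intro e he
    rw [← hrange] at he
    obtain ⟨k, rfl⟩ := he
    have hrk : r (i k) = k := LinearMap.congr_fun hr k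
    simp [hp, LinearMap.sub_apply, hrk]
  set e := π'.quotKerEquivOfSurjective hπ with he
  set p' : (E ⧸ LinearMap.ker π') →ₗ[v.integer] E :=
    (LinearMap.ker π').liftQ p hker with hp'
  refine ⟨p' ∘ₗ (e.symm : _ →ₗ[v.integer] _), ?_⟩
  have hcomp : π' ∘ₗ p' = (e : (E ⧸ LinearMap.ker π') →ₗ[v.integer] _) := by
    apply Submodule.linearMap_qext
    ext x
    have h1 : π' (i (r x)) = 0 := by
      have : i (r x) ∈ LinearMap.ker π' := hrange ▸ LinearMap.mem_range_self i (r x)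
      simpa using this
    have h2 : e (Submodule.Quotient.mk x) = π' x := rfl
    simp only [LinearMap.comp_apply, Submodule.mkQ_apply, LinearEquiv.coe_coe, h2,
      hp', Submodule.liftQ_apply, hp, LinearMap.sub_apply, LinearMap.id_apply, map_sub, h1]
    simp
  ext m
  have := LinearMap.congr_fun hcomp (e.symm m)
  simp only [LinearMap.comp_apply, LinearEquiv.coe_coe] at this ⊢
  rw [this]
  simp
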